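/- arXiv:2501.08493 — 3 statements merged into one kernel-verified Lean document; each statement's English description precedes it below -/
import Mathlib

section
/- For a multi-index α of nonnegative integers, (1/v_n) ∫_{B(0,1)} x^{2α} dx = (∏_{k: α_k≠0} (2α_k−1)!!) / ((n+2|α|)(n+2|α|−2)···(n+2)), where v_n is the volume of the unit ball in ℝ^n. -/
open MeasureTheory Real Finset


lemma gauss_moment_eq_Gamma (k : ℕ) :
    ∫ t : ℝ, t ^ (2 * k) * Real.exp (-t ^ 2) = Real.Gamma (k + 1 / 2) := by
  have hpos : (0:ℝ) < k + 1/2 := by positivity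
  rw [Real.Gamma_eq_integral hpos, ← integral_comp_rpow_Ioi_of_pos zero_lt_two]
  have heven : ∫ t : ℝ, t ^ (2 * k) * Real.exp (-t ^ 2)
      = 2 * ∫ t in Set.Ioi (0:ℝ), t ^ (2 * k) * Real.exp (-t ^ 2) := by
    rw [← integral_comp_abs (f := fun t => t ^ (2*k) * Real.exp (-t ^ 2))]
    congr 1 with t
    simp [pow_mul, sq_abs]
  rw [heven, ← integral_const_mul]
  refine setIntegral_congr_fun measurableSet_Ioi fun x hx => ?_
  have hx0 : (0:ℝ) < x := hx
  have h1 : (x : ℝ) ^ ((2:ℝ)) = x ^ (2:ℕ) := by rw [rpow_two]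
  have h2 : ((x:ℝ) ^ (2:ℕ) : ℝ) ^ ((k:ℝ) + 1/2 - 1) = x ^ (2*k) / x := by
    rw [← Real.rpow_natCast x 2, ← Real.rpow_mul hx0.le]
    have h3 : ((2:ℕ):ℝ) * ((k:ℝ) + 1/2 - 1) = (2*k : ℕ) - 1 := by push_cast; ring
    rw [h3, Real.rpow_sub hx0, Real.rpow_one, Real.rpow_natCast]
  have h4 : (x:ℝ) ^ ((2:ℝ) - 1) = x := by
    norm_num
  simp only [smul_eq_mul, h1, h2, h4]
  field_simp

lemma Gamma_nat_add_half (k : ℕ) :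
    Real.Gamma (k + 1 / 2) = (Nat.doubleFactorial (2 * k - 1) : ℝ) * Real.sqrt π / 2 ^ k := by
  induction k with
  | zero =>
    norm_num [show ((0:ℕ):ℝ) + 1/2 = 1/2 by norm_num, Real.Gamma_one_half_eq]
  | succ k ih =>
    have h1 : ((k:ℕ)+1 : ℕ) + (1/2 : ℝ) = ((k:ℝ) + 1/2) + 1 := by push_cast; ring
    rw [h1, Real.Gamma_add_one (by positivity), ih]
    have h2 : 2 * (k+1) - 1 = 2*k + 1 := by omega
    rw [h2, Nat.doubleFactorial_add_one]
    push_cast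
    field_simp
    ring

lemma Gamma_add_nat (x : ℝ) (hx : 0 < x) (A : ℕ) :
    Real.Gamma (x + A) = Real.Gamma x * ∏ j ∈ Finset.range A, (x + j) := by
  induction A with
  | zero => simp
  | succ A ih =>
    have h1 : x + ((A:ℕ)+1 : ℕ) = (x + A) + 1 := by push_cast; ring
    rw [h1, Real.Gamma_add_one (by positivity), ih, Finset.prod_range_succ]
    ring

lemma integrable_gauss_moment (k : ℕ) :
    Integrable (fun t : ℝ => t ^ (2 * k) * Real.exp (-t ^ 2)) := by
  have h := integrable_rpow_mul_exp_neg_mul_sq (b := 1) one_pos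
      (s := ((2*k : ℕ) : ℝ)) (lt_of_lt_of_le neg_one_lt_zero (by positivity))
  simpa only [Real.rpow_natCast, neg_mul, one_mul] using h



lemma gauss_fun_eq {n : ℕ} (α : Fin n → ℕ) (y : Fin n → ℝ) :
    (∏ i, ((MeasurableEquiv.toLp 2 (Fin n → ℝ)) y i) ^ (2 * α i)) *
      Real.exp (-‖(MeasurableEquiv.toLp 2 (Fin n → ℝ)) y‖^2)
    = ∏ i, (y i ^ (2 * α i) * Real.exp (-(y i)^2)) := by
  have hcoord : ∀ i, (MeasurableEquiv.toLp 2 (Fin n → ℝ)) y i = y i := fun i => rfl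
  have hnorm : ‖(MeasurableEquiv.toLp 2 (Fin n → ℝ)) y‖^2 = ∑ i, (y i)^2 := by
    rw [EuclideanSpace.norm_eq, Real.sq_sqrt (by positivity)]
    simp [hcoord]
  simp only [hcoord, hnorm, Finset.prod_mul_distrib, neg_eq_iff_eq_neg.mpr rfl]
  rw [← Finset.sum_neg_distrib, Real.exp_sum]

lemma gauss_prod {n : ℕ} (α : Fin n → ℕ) :
    ∫ x : EuclideanSpace ℝ (Fin n), (∏ i, (x i) ^ (2 * α i)) * Real.exp (-‖x‖^2)
      = ∏ i, Real.Gamma (α i + 1/2) := by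
  rw [← ((EuclideanSpace.volume_preserving_symm_measurableEquiv_toLp (Fin n)).symm).integral_comp
      (MeasurableEquiv.measurableEmbedding _) _]
  calc ∫ y : Fin n → ℝ, (∏ i, ((MeasurableEquiv.toLp 2 (Fin n → ℝ)) y i) ^ (2 * α i)) *
        Real.exp (-‖(MeasurableEquiv.toLp 2 (Fin n → ℝ)) y‖^2)
      = ∫ y : Fin n → ℝ, ∏ i, (y i ^ (2 * α i) * Real.exp (-(y i)^2)) := by
        congr 1; funext y; exact gauss_fun_eq α y
    _ = ∏ i, ∫ t : ℝ, t ^ (2 * α i) * Real.exp (-t^2) := by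
        rw [MeasureTheory.integral_fintype_prod_volume_eq_prod
          (f := fun i (t : ℝ) => t ^ (2 * α i) * Real.exp (-t^2))]
    _ = ∏ i, Real.Gamma (α i + 1/2) :=
        Finset.prod_congr rfl fun i _ => gauss_moment_eq_Gamma (α i)

lemma integrable_gauss_E {n : ℕ} (α : Fin n → ℕ) :
    Integrable (fun x : EuclideanSpace ℝ (Fin n) =>
      (∏ i, (x i) ^ (2 * α i)) * Real.exp (-‖x‖^2)) := by
  rw [← ((EuclideanSpace.volume_preserving_symm_measurableEquiv_toLp (Fin n)).symm).integrable_comp_emb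
      (MeasurableEquiv.measurableEmbedding _)]
  have : ((fun x : EuclideanSpace ℝ (Fin n) => (∏ i, (x i) ^ (2 * α i)) * Real.exp (-‖x‖^2)) ∘
      (MeasurableEquiv.toLp 2 (Fin n → ℝ)))
      = fun y : Fin n → ℝ => ∏ i, (y i ^ (2 * α i) * Real.exp (-(y i)^2)) := by
    funext y; exact gauss_fun_eq α y
  rw [MeasurableEquiv.symm_symm, this]
  exact Integrable.fintype_prod (f := fun i (t : ℝ) => t ^ (2 * α i) * Real.exp (-t^2)) fun i => integrable_gauss_moment (α i)


lemma g_cont {n : ℕ} (α : Fin n → ℕ) :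
    Continuous (fun x : EuclideanSpace ℝ (Fin n) => ∏ i, (x i) ^ (2 * α i)) := by
  exact continuous_finset_prod _ fun i _ => ((EuclideanSpace.proj i).continuous).pow _

lemma g_integrableOn_ball {n : ℕ} (α : Fin n → ℕ) (c : ℝ) :
    IntegrableOn (fun x : EuclideanSpace ℝ (Fin n) => ∏ i, (x i) ^ (2 * α i))
      (Metric.ball (0 : EuclideanSpace ℝ (Fin n)) c) :=
  ((g_cont α).locallyIntegrable.integrableOn_isCompact (isCompact_closedBall 0 c)).mono_set
    Metric.ball_subset_closedBall

lemma g_smul {n : ℕ} (α : Fin n → ℕ) (c : ℝ) (x : EuclideanSpace ℝ (Fin n)) :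
    (∏ i, ((c • x) i) ^ (2 * α i)) = c ^ (2 * ∑ i, α i) * ∏ i, (x i) ^ (2 * α i) := by
  have : ∀ i, (c • x) i = c * x i := fun i => rfl
  simp only [this, mul_pow, Finset.prod_mul_distrib]
  rw [Finset.prod_pow_eq_pow_sum, Finset.mul_sum]

lemma ball_scaling {n : ℕ} (α : Fin n → ℕ) {c : ℝ} (hc : 0 < c) :
    ∫ x in Metric.ball (0 : EuclideanSpace ℝ (Fin n)) c, (∏ i, (x i) ^ (2 * α i))
      = c ^ (n + 2 * ∑ i, α i) *
        ∫ x in Metric.ball (0 : EuclideanSpace ℝ (Fin n)) 1, (∏ i, (x i) ^ (2 * α i)) := by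
  set E := EuclideanSpace ℝ (Fin n)
  set g : E → ℝ := fun x => ∏ i, (x i) ^ (2 * α i) with hg
  set A := 2 * ∑ i, α i with hA
  have h1 := MeasureTheory.Measure.integral_comp_inv_smul_of_nonneg (volume : Measure E)
    ((Metric.ball (0:E) 1).indicator g) hc.le
  have hfe : (fun x : E => ((Metric.ball (0:E) 1).indicator g) (c⁻¹ • x))
      = fun x => (c⁻¹) ^ A * ((Metric.ball (0:E) c).indicator g) x := by
    funext x
    by_cases hx : x ∈ Metric.ball (0:E) c
    · have hx1 : c⁻¹ • x ∈ Metric.ball (0:E) 1 := by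
        rw [mem_ball_zero_iff] at hx ⊢
        rw [norm_smul, norm_inv, Real.norm_eq_abs, abs_of_pos hc]
        rw [inv_mul_lt_iff₀ hc, mul_one]
        exact hx
      rw [Set.indicator_of_mem hx1, Set.indicator_of_mem hx, hg]
      simp only [g_smul α c⁻¹ x, ← hA]
    · have hx1 : c⁻¹ • x ∉ Metric.ball (0:E) 1 := by
        rw [mem_ball_zero_iff] at hx ⊢
        rw [norm_smul, norm_inv, Real.norm_eq_abs, abs_of_pos hc, inv_mul_lt_iff₀ hc, mul_one]
        exact hx
      rw [Set.indicator_of_notMem hx1, Set.indicator_of_notMem hx, mul_zero]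
  rw [hfe] at h1
  rw [integral_const_mul, integral_indicator measurableSet_ball,
    integral_indicator measurableSet_ball, finrank_euclideanSpace,
    Fintype.card_fin] at h1
  have hc' : (c:ℝ) ^ A ≠ 0 := by positivity
  rw [pow_add]
  field_simp at h1
  rw [smul_eq_mul, one_div, inv_pow, inv_mul_eq_iff_eq_mul₀ hc'] at h1
  rw [h1]; ring

lemma integrableOn_exp_neg_Ioi' (c : ℝ) :
    IntegrableOn (fun x : ℝ => Real.exp (-x)) (Set.Ioi c) := by
  have h := (Measure.measurePreserving_neg (volume : Measure ℝ)).integrableOn_comp_preimage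
      (Homeomorph.neg ℝ).measurableEmbedding (f := Real.exp) (s := Set.Iio (-c))
  rw [show (Neg.neg : ℝ → ℝ) ⁻¹' (Set.Iio (-c)) = Set.Ioi c by
      ext x; simp [Set.mem_Iio, neg_lt_neg_iff, neg_lt]] at h
  exact h.mpr ((integrableOn_exp_Iic (-c)).mono_set Set.Iio_subset_Iic_self)

lemma lint_exp_Ioi (a : ℝ) :
    ∫⁻ s in Set.Ioi a, ENNReal.ofReal (Real.exp (-s)) = ENNReal.ofReal (Real.exp (-a)) := by
  rw [← ofReal_integral_eq_lintegral_ofReal (integrableOn_exp_neg_Ioi' a)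
    (ae_of_all _ fun s => (Real.exp_pos _).le),
    integral_exp_neg_Ioi]

lemma g_nonneg {n : ℕ} (α : Fin n → ℕ) (x : EuclideanSpace ℝ (Fin n)) :
    0 ≤ ∏ i, (x i) ^ (2 * α i) :=
  Finset.prod_nonneg fun i _ => by rw [pow_mul]; positivity

lemma layer_cake {n : ℕ} (α : Fin n → ℕ) :
    ∫ x : EuclideanSpace ℝ (Fin n), (∏ i, (x i) ^ (2 * α i)) * Real.exp (-‖x‖^2)
      = (∫ x in Metric.ball (0 : EuclideanSpace ℝ (Fin n)) 1, (∏ i, (x i) ^ (2 * α i)))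
        * Real.Gamma ((n + 2 * ∑ i, α i : ℕ) / 2 + 1) := by
  set E := EuclideanSpace ℝ (Fin n)
  set g : E → ℝ := fun x => ∏ i, (x i) ^ (2 * α i) with hgdef
  set m : ℕ := n + 2 * ∑ i, α i with hm
  set I : ℝ := ∫ x in Metric.ball (0:E) 1, g x with hI
  have hI0 : 0 ≤ I := setIntegral_nonneg measurableSet_ball fun x _ => g_nonneg α x
  have hΓpos : (0:ℝ) < (m:ℝ)/2 + 1 := by positivity
  -- the product-space function
  set Φ : E × ℝ → ENNReal := fun p =>
    ENNReal.ofReal (g p.1 * Real.exp (-p.2)) *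
      ({q : E × ℝ | ‖q.1‖^2 < q.2}.indicator (fun _ => 1) p) with hΦ
  have hopen : IsOpen {q : E × ℝ | ‖q.1‖^2 < q.2} :=
    isOpen_lt (by fun_prop) continuous_snd
  have hΦmeas : Measurable Φ := by
    apply Measurable.mul
    · apply Measurable.ennreal_ofReal
      exact (((g_cont α).comp continuous_fst).mul
        (Real.continuous_exp.comp continuous_snd.neg)).measurable
    · exact (measurable_const.indicator hopen.measurableSet)
  -- fiberwise in s : Φ (x, s) as an indicator in s
  have hfib1 : ∀ x : E, (fun s => Φ (x, s))
      = (Set.Ioi (‖x‖^2)).indicator (fun s => ENNReal.ofReal (g x * Real.exp (-s))) := by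
    intro x; funext s
    by_cases h : ‖x‖^2 < s
    · rw [Set.indicator_of_mem (Set.mem_Ioi.mpr h), hΦ]
      simp only [Set.indicator_of_mem (show (x,s) ∈ {q : E × ℝ | ‖q.1‖^2 < q.2} from h), mul_one]
    · rw [Set.indicator_of_notMem (by simpa using h), hΦ]
      simp only [Set.indicator_of_notMem (show (x,s) ∉ {q : E × ℝ | ‖q.1‖^2 < q.2} from h),
        mul_zero]
  -- step 2: inner integral over s
  have hstep2 : ∀ x : E, ∫⁻ s in Set.Ioi (0:ℝ), Φ (x, s)
      = ENNReal.ofReal (g x * Real.exp (-‖x‖^2)) := by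
    intro x
    rw [hfib1 x, lintegral_indicator measurableSet_Ioi,
      Measure.restrict_restrict measurableSet_Ioi]
    rw [show Set.Ioi (‖x‖^2) ∩ Set.Ioi (0:ℝ) = Set.Ioi (‖x‖^2) by
      rw [Set.Ioi_inter_Ioi, max_eq_left (by positivity)]]
    have : ∀ s : ℝ, ENNReal.ofReal (g x * Real.exp (-s))
        = ENNReal.ofReal (g x) * ENNReal.ofReal (Real.exp (-s)) := fun s =>
      ENNReal.ofReal_mul (g_nonneg α x)
    simp_rw [this]
    rw [lintegral_const_mul _ (by fun_prop), lint_exp_Ioi,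
      ← ENNReal.ofReal_mul (g_nonneg α x)]
  -- step 4: inner integral over x, for fixed s > 0
  have hfib2 : ∀ s : ℝ, 0 < s → (fun x => Φ (x, s))
      = (Metric.ball (0:E) (Real.sqrt s)).indicator
          (fun x => ENNReal.ofReal (g x * Real.exp (-s))) := by
    intro s hs; funext x
    have hmem : x ∈ Metric.ball (0:E) (Real.sqrt s) ↔ ‖x‖^2 < s := by
      rw [mem_ball_zero_iff, Real.lt_sqrt (norm_nonneg x)]
    by_cases h : ‖x‖^2 < s
    · rw [Set.indicator_of_mem (hmem.mpr h), hΦ]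
      simp only [Set.indicator_of_mem (show (x,s) ∈ {q : E × ℝ | ‖q.1‖^2 < q.2} from h), mul_one]
    · rw [Set.indicator_of_notMem (fun hc => h (hmem.mp hc)), hΦ]
      simp only [Set.indicator_of_notMem (show (x,s) ∉ {q : E × ℝ | ‖q.1‖^2 < q.2} from h),
        mul_zero]
  have hstep4 : ∀ s ∈ Set.Ioi (0:ℝ), ∫⁻ x, Φ (x, s)
      = ENNReal.ofReal (Real.exp (-s) * (s ^ ((m:ℝ)/2) * I)) := by
    intro s hs
    have hs' : (0:ℝ) < s := hs
    rw [hfib2 s hs', lintegral_indicator measurableSet_ball]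
    have : ∫⁻ x in Metric.ball (0:E) (Real.sqrt s), ENNReal.ofReal (g x * Real.exp (-s))
        = ENNReal.ofReal (∫ x in Metric.ball (0:E) (Real.sqrt s), g x * Real.exp (-s)) := by
      rw [ofReal_integral_eq_lintegral_ofReal
        ((g_integrableOn_ball α _).mul_const _)
        (ae_of_all _ fun x => mul_nonneg (g_nonneg α x) (Real.exp_pos _).le)]
    rw [this, integral_mul_const, ball_scaling α (Real.sqrt_pos.mpr hs')]
    have hsq : Real.sqrt s ^ (n + 2 * ∑ i, α i) = s ^ ((m:ℝ)/2) := by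
      rw [← Real.rpow_natCast (Real.sqrt s) _, Real.sqrt_eq_rpow, ← Real.rpow_mul hs'.le]
      congr 1
      rw [hm]; push_cast; ring
    rw [hsq]
    congr 1
    ring
  -- swap
  have hswap : ∫⁻ x, ∫⁻ s in Set.Ioi (0:ℝ), Φ (x, s)
      = ∫⁻ s in Set.Ioi (0:ℝ), ∫⁻ x, Φ (x, s) := by
    exact lintegral_lintegral_swap (hΦmeas.aemeasurable)
  -- LHS
  have hG0 : 0 ≤ ∫ x : E, g x * Real.exp (-‖x‖^2) :=
    integral_nonneg fun x => mul_nonneg (g_nonneg α x) (Real.exp_pos _).le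
  have hlhs : ∫⁻ x, ∫⁻ s in Set.Ioi (0:ℝ), Φ (x, s)
      = ENNReal.ofReal (∫ x : E, g x * Real.exp (-‖x‖^2)) := by
    simp_rw [hstep2]
    rw [ofReal_integral_eq_lintegral_ofReal (integrable_gauss_E α)
      (ae_of_all _ fun x => mul_nonneg (g_nonneg α x) (Real.exp_pos _).le)]
  -- RHS
  have hint : IntegrableOn (fun s : ℝ => Real.exp (-s) * s ^ ((m:ℝ)/2)) (Set.Ioi 0) := by
    have h := Real.GammaIntegral_convergent hΓpos
    simpa using h
  have hrhs : ∫⁻ s in Set.Ioi (0:ℝ), ∫⁻ x, Φ (x, s)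
      = ENNReal.ofReal (Real.Gamma ((m:ℝ)/2 + 1) * I) := by
    rw [setLIntegral_congr_fun_ae measurableSet_Ioi (ae_of_all _ hstep4)]
    have : ∀ s : ℝ, Real.exp (-s) * (s ^ ((m:ℝ)/2) * I)
        = (Real.exp (-s) * s ^ ((m:ℝ)/2)) * I := fun s => by ring
    simp_rw [this]
    rw [← ofReal_integral_eq_lintegral_ofReal (hint.mul_const I)
      (by filter_upwards [ae_restrict_mem measurableSet_Ioi] with s hs
          have : (0:ℝ) < s := hs
          positivity)]
    rw [integral_mul_const]
    congr 1
    rw [Real.Gamma_eq_integral hΓpos]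
    congr 1
    refine setIntegral_congr_fun measurableSet_Ioi fun s hs => ?_
    norm_num
  have := hlhs.symm.trans (hswap.trans hrhs)
  rw [ENNReal.ofReal_eq_ofReal_iff hG0
    (mul_nonneg (Real.Gamma_nonneg_of_nonneg hΓpos.le) hI0)] at this
  show ∫ x : E, g x * Real.exp (-‖x‖^2) = I * Real.Gamma ((m:ℝ)/2 + 1)
  rw [this]
  ring

/-- For a multi-index `α` of nonnegative integers,
`(1/v_n) ∫_{B(0,1)} x^{2α} dx = (∏_{k : α k ≠ 0} (2 α k − 1)!!) /
  ((n+2|α|)(n+2|α|−2)⋯(n+2))`, where `v_n` is the volume of the unit ball and the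
denominator is `∏_{j=1}^{|α|} (n + 2j)`. -/
theorem wallis_formula_ball (n : ℕ) (hn : 3 ≤ n) (α : Fin n → ℕ) :
    (1 / (volume (Metric.ball (0 : EuclideanSpace ℝ (Fin n)) 1)).toReal) *
      ∫ x in Metric.ball (0 : EuclideanSpace ℝ (Fin n)) 1,
        (∏ i : Fin n, (x i) ^ (2 * α i)) =
      (∏ i ∈ Finset.univ.filter (fun i => α i ≠ 0), (Nat.doubleFactorial (2 * α i - 1) : ℝ)) /
        ∏ j ∈ Finset.Icc 1 (∑ i, α i), ((n : ℝ) + 2 * j) := by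
  haveI : Nonempty (Fin n) := ⟨⟨0, by omega⟩⟩
  set E := EuclideanSpace ℝ (Fin n)
  set A : ℕ := ∑ i, α i with hA
  set I : ℝ := ∫ x in Metric.ball (0:E) 1, (∏ i, (x i) ^ (2 * α i)) with hI
  set numR : ℝ := ∏ i, (Nat.doubleFactorial (2 * α i - 1) : ℝ) with hnumR
  set P : ℝ := ∏ j ∈ Finset.range A, ((n:ℝ)/2 + 1 + j) with hP
  have hπn : (0:ℝ) < Real.sqrt π ^ n := by positivity
  have hΓn : (0:ℝ) < Real.Gamma ((n:ℝ)/2 + 1) := Real.Gamma_pos_of_pos (by positivity)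
  have hPpos : (0:ℝ) < P := Finset.prod_pos fun j _ => by positivity
  -- key identity
  have key : I * Real.Gamma ((n + 2 * A : ℕ) / 2 + 1) = ∏ i, Real.Gamma (α i + 1/2) :=
    (layer_cake α).symm.trans (gauss_prod α)
  -- volume of the ball
  have hVol : (volume (Metric.ball (0:E) 1)).toReal = Real.sqrt π ^ n / Real.Gamma ((n:ℝ)/2 + 1) := by
    rw [EuclideanSpace.volume_ball, Fintype.card_fin]
    rw [ENNReal.toReal_mul, ENNReal.toReal_pow, ENNReal.toReal_ofReal zero_le_one,
      ENNReal.toReal_ofReal (by positivity), one_pow, one_mul]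
  -- product of Gammas
  have hprodΓ : ∏ i, Real.Gamma (α i + 1/2) = numR * Real.sqrt π ^ n / 2 ^ A := by
    simp_rw [_root_.Gamma_nat_add_half]
    rw [Finset.prod_div_distrib, Finset.prod_mul_distrib, Finset.prod_const,
      Finset.card_univ, Fintype.card_fin, Finset.prod_pow_eq_pow_sum]
  -- Gamma ratio
  have hΓm : Real.Gamma (((n + 2 * A : ℕ) : ℝ) / 2 + 1) = Real.Gamma ((n:ℝ)/2 + 1) * P := by
    have h1 : ((n + 2 * A : ℕ) : ℝ) / 2 + 1 = ((n:ℝ)/2 + 1) + A := by push_cast; ring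
    rw [h1, Gamma_add_nat _ (by positivity), hP]
  -- denominator identity
  have hden : (2:ℝ) ^ A * P = ∏ j ∈ Finset.Icc 1 A, ((n:ℝ) + 2 * j) := by
    rw [show Finset.Icc 1 A = Finset.Ico 1 (A+1) by rw [Finset.Ico_add_one_right_eq_Icc],
      Finset.prod_Ico_eq_prod_range]
    simp only [Nat.add_sub_cancel]
    rw [hP, show ((2:ℝ)^A) = ∏ _j ∈ Finset.range A, (2:ℝ) by
      rw [Finset.prod_const, Finset.card_range], ← Finset.prod_mul_distrib]
    exact Finset.prod_congr rfl fun j _ => by push_cast; ring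
  -- numerator identity
  have hnum : (∏ i ∈ Finset.univ.filter (fun i => α i ≠ 0),
      (Nat.doubleFactorial (2 * α i - 1) : ℝ)) = numR := by
    rw [hnumR]
    refine Finset.prod_filter_of_ne fun i _ h => ?_
    intro h0
    apply h
    rw [h0]
    norm_num
  -- conclude
  have hΓm' : Real.Gamma (((n + 2 * A : ℕ) : ℝ) / 2 + 1) ≠ 0 := by
    rw [hΓm]; positivity
  have hIvalue : I = (numR * Real.sqrt π ^ n / 2 ^ A) / (Real.Gamma ((n:ℝ)/2 + 1) * P) := by
    rw [← hprodΓ, ← key, hΓm]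
    field_simp
  rw [hVol, hIvalue, hnum, ← hden]
  field_simp
end

section
/- For fixed reals β_2,...,β_n > −1/2, as β_1 → ∞ the sphere integral satisfies ∫_{∂B(0,1)} x^{2β} dσ(x) ~ 2 e^{β_2+···+β_n} (∏_{k=2}^n Γ(β_k+1/2)) · β_1^{β_1} / |β|^{|β|+(n−1)/2}, i.e., the ratio of the two sides tends to 1. -/
open MeasureTheory Real Filter Set
open scoped Topology

lemma gauss1d {γ : ℝ} (hγ : -1/2 < γ) :
    ∫ t : ℝ, |t| ^ (2 * γ) * Real.exp (-t ^ 2) = Real.Gamma (γ + 1/2) := by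
  have h1 : ∀ t : ℝ, |t| ^ (2 * γ) * Real.exp (-t ^ 2)
      = (fun x : ℝ => x ^ (2 * γ) * Real.exp (-x ^ 2)) |t| := by
    intro t; simp [sq_abs]
  simp_rw [h1]
  rw [integral_comp_abs (f := fun x : ℝ => x ^ (2 * γ) * Real.exp (-x ^ 2))]
  have h2 : ∀ x ∈ Ioi (0:ℝ), x ^ (2*γ) * Real.exp (-x ^ 2)
      = x ^ (2*γ) * Real.exp (-x ^ (2:ℝ)) := by
    intro x hx
    rw [← Real.rpow_natCast x 2]; norm_num
  rw [setIntegral_congr_fun measurableSet_Ioi h2,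
    integral_rpow_mul_exp_neg_rpow two_pos (by linarith)]
  rw [show (2*γ+1)/2 = γ + 1/2 by ring]
  ring

lemma gaussNd (n : ℕ) (γ : Fin n → ℝ) (hγ : ∀ i, -1/2 < γ i) :
    ∫ x : EuclideanSpace ℝ (Fin n),
      (∏ i, |x i| ^ (2 * γ i)) * Real.exp (-‖x‖ ^ 2)
      = ∏ i, Real.Gamma (γ i + 1/2) := by
  rw [← ((EuclideanSpace.volume_preserving_symm_measurableEquiv_toLp (Fin n)).symm).integral_comp']
  have h : ∀ y : Fin n → ℝ,
      (∏ i, |((MeasurableEquiv.toLp 2 (Fin n → ℝ)).symm.symm y) i| ^ (2 * γ i)) *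
        Real.exp (-‖(MeasurableEquiv.toLp 2 (Fin n → ℝ)).symm.symm y‖ ^ 2)
      = ∏ i, (|y i| ^ (2 * γ i) * Real.exp (-(y i) ^ 2)) := by
    intro y
    have hy : ∀ i, ((MeasurableEquiv.toLp 2 (Fin n → ℝ)).symm.symm y) i = y i := fun i => rfl
    have hnorm : ‖(MeasurableEquiv.toLp 2 (Fin n → ℝ)).symm.symm y‖ ^ 2 = ∑ i, (y i) ^ 2 := by
      rw [EuclideanSpace.norm_eq, sq_sqrt (by positivity)]
      simp [hy, sq_abs]
    rw [hnorm, Finset.prod_mul_distrib]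
    simp_rw [hy, ← Real.exp_sum, ← Finset.sum_neg_distrib]
  simp_rw [h]
  rw [MeasureTheory.integral_fintype_prod_volume_eq_prod (ι := Fin n)
    (f := fun i t => |t| ^ (2 * γ i) * Real.exp (-t ^ 2))]
  exact Finset.prod_congr rfl fun i _ => gauss1d (hγ i)

lemma sphere_formula (n : ℕ) (hn : 3 ≤ n) (γ : Fin n → ℝ) (hγ : ∀ i, -1/2 < γ i) :
    ∫ x : Metric.sphere (0 : EuclideanSpace ℝ (Fin n)) 1,
        (∏ i, |(x : EuclideanSpace ℝ (Fin n)) i| ^ (2 * γ i))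
        ∂((volume : Measure (EuclideanSpace ℝ (Fin n))).toSphere)
    = 2 * (∏ i, Real.Gamma (γ i + 1/2)) / Real.Gamma ((∑ i, γ i) + n/2) := by
  classical
  set E := EuclideanSpace ℝ (Fin n)
  set μ : Measure E := volume
  set F : E → ℝ := fun x => (∏ i, |x i| ^ (2 * γ i)) * Real.exp (-‖x‖ ^ 2) with hF
  set g : Metric.sphere (0:E) 1 → ℝ :=
    fun ω => ∏ i, |(ω : E) i| ^ (2 * γ i) with hg
  have hsum : -((n:ℝ)/2) < ∑ i, γ i := by
    have : ∑ i : Fin n, (-1/2 : ℝ) < ∑ i, γ i :=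
      Finset.sum_lt_sum_of_nonempty (Finset.univ_nonempty_iff.2 ⟨⟨0, by omega⟩⟩) fun i _ => hγ i
    rw [Finset.sum_const, Finset.card_univ, Fintype.card_fin, nsmul_eq_mul] at this
    nlinarith [this]
  have hΓpos : 0 < Real.Gamma ((∑ i, γ i) + n/2) :=
    Real.Gamma_pos_of_pos (by linarith)
  have dimE : Module.finrank ℝ E = n := finrank_euclideanSpace_fin
  have hNontriv : Nontrivial E :=
    Module.nontrivial_of_finrank_pos (R := ℝ) (by rw [dimE]; omega)
  have key : ∫ x, F x ∂μ
      = (∫ ω, g ω ∂μ.toSphere) * ((1/2) * Real.Gamma ((∑ i, γ i) + n/2)) := by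
    have h0 : ∫ x, F x ∂μ = ∫ x : ({(0:E)}ᶜ : Set E), F x.1 ∂(μ.comap (↑)) := by
      rw [integral_subtype_comap (measurableSet_singleton _).compl F,
        MeasureTheory.restrict_compl_singleton]
    have h1 : ∫ x : ({(0:E)}ᶜ : Set E), F x.1 ∂(μ.comap (↑))
        = ∫ p : Metric.sphere (0:E) 1 × Ioi (0:ℝ), F (p.2.1 • p.1.1)
            ∂(μ.toSphere.prod (.volumeIoiPow (Module.finrank ℝ E - 1))) := by
      rw [← μ.measurePreserving_homeomorphUnitSphereProd.integral_comp
        (Homeomorph.measurableEmbedding _) (fun p => F (p.2.1 • p.1.1))]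
      refine integral_congr_ae (Filter.Eventually.of_forall fun x => ?_)
      have hx : (↑((homeomorphUnitSphereProd E) x).2 : ℝ) •
          (↑((homeomorphUnitSphereProd E) x).1 : E) = ↑x := by
        simp only [homeomorphUnitSphereProd_apply_fst_coe,
          homeomorphUnitSphereProd_apply_snd_coe]
        exact smul_inv_smul₀ (norm_ne_zero_iff.2 x.2) x.1
      show F x.1 = F _
      rw [hx]
    have h2 : ∀ p : Metric.sphere (0:E) 1 × Ioi (0:ℝ),
        F (p.2.1 • p.1.1) = g p.1 *
          (p.2.1 ^ (2 * ∑ i, γ i) * Real.exp (-p.2.1 ^ 2)) := by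
      rintro ⟨⟨ω, hω⟩, ⟨r, hr⟩⟩
      rw [mem_sphere_zero_iff_norm] at hω
      rw [mem_Ioi] at hr
      have hsm : ∀ i : Fin n, (r • ω) i = r * ω i := fun i => rfl
      have hnrm : ‖r • ω‖ = r := by
        rw [norm_smul, hω, Real.norm_eq_abs, abs_of_pos hr, mul_one]
      simp only [hF, hnrm, hsm]
      have : ∀ i : Fin n, |r * ω i| ^ (2 * γ i)
          = r ^ (2 * γ i) * |ω i| ^ (2 * γ i) := by
        intro i
        rw [abs_mul, abs_of_pos hr, Real.mul_rpow hr.le (abs_nonneg _)]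
      simp_rw [this, Finset.prod_mul_distrib, ← Real.rpow_sum_of_pos hr,
        ← Finset.mul_sum]
      ring
    simp_rw [h0, h1, h2]
    rw [MeasureTheory.integral_prod_mul (μ := μ.toSphere)
      (f := g) (g := fun r : Ioi (0:ℝ) => r.1 ^ (2 * ∑ i, γ i) * Real.exp (-r.1 ^ 2))]
    congr 1
    -- radial integral
    simp only [Measure.volumeIoiPow, ENNReal.ofReal]
    rw [integral_withDensity_eq_integral_smul
      ((measurable_subtype_coe.pow_const _).real_toNNReal)
      (fun r : Ioi (0:ℝ) => r.1 ^ (2 * ∑ i, γ i) * Real.exp (-r.1 ^ 2)),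
      integral_subtype_comap measurableSet_Ioi fun a : ℝ =>
        Real.toNNReal (a ^ (Module.finrank ℝ E - 1)) •
          (a ^ (2 * ∑ i, γ i) * Real.exp (-a ^ 2))]
    have hcongr : ∀ x ∈ Ioi (0:ℝ),
        Real.toNNReal (x ^ (Module.finrank ℝ E - 1)) •
          (x ^ (2 * ∑ i, γ i) * Real.exp (-x ^ 2))
        = x ^ (2 * (∑ i, γ i) + ((n:ℝ) - 1)) * Real.exp (-x ^ (2:ℝ)) := by
      intro x hx
      have hx0 : (0:ℝ) < x := hx
      rw [NNReal.smul_def, Real.coe_toNNReal _ (pow_nonneg hx0.le _), dimE]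
      rw [show ((2:ℝ)) = ((2:ℕ):ℝ) by norm_num, Real.rpow_natCast x 2,
        Real.rpow_add hx0, ← Real.rpow_natCast x (n-1)]
      rw [Nat.cast_sub (by omega), Nat.cast_one, smul_eq_mul]
      ring
    rw [setIntegral_congr_fun measurableSet_Ioi hcongr,
      integral_rpow_mul_exp_neg_rpow two_pos (by push_cast; linarith)]
    rw [show (2 * (∑ i, γ i) + ((n:ℝ) - 1) + 1)/2 = (∑ i, γ i) + (n:ℝ)/2 by ring]
  have := gaussNd n γ hγ
  rw [key] at this
  rw [hg] at this
  rw [eq_div_iff (ne_of_gt hΓpos)]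
  linear_combination 2 * this


lemma wendel_upper {r : ℝ} (hr0 : 0 ≤ r) (hr1 : r ≤ 1) {x : ℝ} (hx : 0 < x) :
    Real.Gamma (x + r) ≤ Real.Gamma x * x ^ r := by
  have h := Real.convexOn_log_Gamma.2 (mem_Ioi.2 hx) (mem_Ioi.2 (by linarith : (0:ℝ) < x + 1))
    (by linarith : (0:ℝ) ≤ 1 - r) hr0 (by ring)
  have harg : (1 - r) • x + r • (x + 1) = x + r := by simp [smul_eq_mul]; ring
  rw [harg] at h
  have hΓx : 0 < Real.Gamma x := Real.Gamma_pos_of_pos hx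
  have hΓxr : 0 < Real.Gamma (x + r) := Real.Gamma_pos_of_pos (by linarith)
  have hΓx1 : Real.Gamma (x + 1) = x * Real.Gamma x := Real.Gamma_add_one hx.ne'
  simp only [Function.comp_apply, smul_eq_mul] at h
  calc Real.Gamma (x + r) = Real.exp (Real.log (Real.Gamma (x + r))) := (Real.exp_log hΓxr).symm
    _ ≤ Real.exp ((1-r) * Real.log (Real.Gamma x) + r * Real.log (Real.Gamma (x+1))) :=
        Real.exp_le_exp.2 h
    _ = Real.Gamma x ^ (1-r) * Real.Gamma (x+1) ^ r := by
        rw [Real.exp_add, Real.rpow_def_of_pos hΓx, Real.rpow_def_of_pos (by rw [hΓx1]; positivity),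
          mul_comm (Real.log _), mul_comm (Real.log _)]
    _ = Real.Gamma x * x ^ r := by
        rw [hΓx1, Real.mul_rpow hx.le hΓx.le, ← mul_assoc, mul_comm (Real.Gamma x ^ (1-r)),
          mul_assoc, ← Real.rpow_add hΓx]
        norm_num
        ring

lemma wendel_lower {r : ℝ} (hr0 : 0 ≤ r) (hr1 : r ≤ 1) {x : ℝ} (hx : 0 < x) :
    x * Real.Gamma x ≤ Real.Gamma (x + r) * (x + r) ^ (1 - r) := by
  have h := Real.convexOn_log_Gamma.2 (mem_Ioi.2 (by linarith : (0:ℝ) < x + r))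
    (mem_Ioi.2 (by linarith : (0:ℝ) < x + r + 1)) hr0 (by linarith : (0:ℝ) ≤ 1 - r) (by ring)
  have harg : r • (x + r) + (1 - r) • (x + r + 1) = x + 1 := by simp [smul_eq_mul]; ring
  rw [harg] at h
  have hΓxr : 0 < Real.Gamma (x + r) := Real.Gamma_pos_of_pos (by linarith)
  have hΓx1 : Real.Gamma (x + 1) = x * Real.Gamma x := Real.Gamma_add_one hx.ne'
  have hΓxr1 : Real.Gamma (x + r + 1) = (x + r) * Real.Gamma (x + r) :=
    Real.Gamma_add_one (by positivity)
  simp only [Function.comp_apply, smul_eq_mul] at h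
  calc x * Real.Gamma x = Real.exp (Real.log (Real.Gamma (x + 1))) := by
        rw [Real.exp_log (by rw [hΓx1]; positivity), hΓx1]
    _ ≤ Real.exp (r * Real.log (Real.Gamma (x+r)) + (1-r) * Real.log (Real.Gamma (x+r+1))) :=
        Real.exp_le_exp.2 h
    _ = Real.Gamma (x+r) ^ r * Real.Gamma (x+r+1) ^ (1-r) := by
        rw [Real.exp_add, Real.rpow_def_of_pos hΓxr,
          Real.rpow_def_of_pos (by rw [hΓxr1]; positivity),
          mul_comm (Real.log _), mul_comm (Real.log _)]
    _ = Real.Gamma (x + r) * (x + r) ^ (1 - r) := by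
        rw [hΓxr1, Real.mul_rpow (by positivity) hΓxr.le, ← mul_assoc,
          mul_comm (Real.Gamma (x+r) ^ r), mul_assoc, ← Real.rpow_add hΓxr]
        norm_num
        ring

lemma aux_div_tendsto (a c : ℝ) : Tendsto (fun x : ℝ => (x + a) / (x + c)) atTop (𝓝 1) := by
  have h1 : Tendsto (fun x : ℝ => 1 + (a - c) / (x + c)) atTop (𝓝 1) := by
    have := (tendsto_const_div_atTop_nhds_zero_nat (𝕜 := ℝ))
    have h2 : Tendsto (fun x : ℝ => (a - c) / (x + c)) atTop (𝓝 0) :=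
      Tendsto.div_atTop tendsto_const_nhds (tendsto_atTop_add_const_right _ c tendsto_id)
    simpa using tendsto_const_nhds.add h2
  refine h1.congr' ?_
  filter_upwards [eventually_gt_atTop (max 0 (-c + 1))] with x hx
  have hxc : 0 < x + c := by have := (max_lt_iff.1 hx).2; linarith
  field_simp
  ring

lemma gamma_ratio_base {r : ℝ} (hr0 : 0 ≤ r) (hr1 : r ≤ 1) :
    Tendsto (fun x : ℝ => Real.Gamma (x + r) / (x ^ r * Real.Gamma x)) atTop (𝓝 1) := by
  have hlow : Tendsto (fun x : ℝ => (x / (x + r)) ^ (1 - r)) atTop (𝓝 1) := by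
    have h1 : Tendsto (fun x : ℝ => x / (x + r)) atTop (𝓝 1) := by
      simpa using aux_div_tendsto 0 r
    have := h1.rpow_const (p := 1 - r) (Or.inl one_ne_zero)
    simpa using this
  refine tendsto_of_tendsto_of_tendsto_of_le_of_le' hlow tendsto_const_nhds ?_ ?_
  · filter_upwards [eventually_gt_atTop (0:ℝ)] with x hx
    have hΓx : 0 < Real.Gamma x := Real.Gamma_pos_of_pos hx
    have hxr : 0 < x + r := by linarith
    rw [Real.div_rpow hx.le hxr.le, div_le_div_iff₀ (by positivity) (by positivity)]
    have h2 : x ^ (1-r) * x ^ r = x := by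
      rw [← Real.rpow_add hx]; norm_num
    calc x ^ (1-r) * (x ^ r * Real.Gamma x) = (x ^ (1-r) * x ^ r) * Real.Gamma x := by ring
      _ = x * Real.Gamma x := by rw [h2]
      _ ≤ Real.Gamma (x+r) * (x+r) ^ (1-r) := wendel_lower hr0 hr1 hx
  · filter_upwards [eventually_gt_atTop (0:ℝ)] with x hx
    have hΓx : 0 < Real.Gamma x := Real.Gamma_pos_of_pos hx
    rw [div_le_one (by positivity)]
    have := wendel_upper hr0 hr1 hx
    nlinarith

lemma gamma_ratio_aux (m : ℕ) : ∀ c : ℝ, 0 ≤ c → c ≤ m + 1 →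
    Tendsto (fun x : ℝ => Real.Gamma (x + c) / (x ^ c * Real.Gamma x)) atTop (𝓝 1) := by
  induction m with
  | zero => intro c h0 h1; refine gamma_ratio_base h0 ?_; push_cast at h1; linarith
  | succ m ih =>
    intro c h0 h1
    by_cases hc : c ≤ 1
    · exact gamma_ratio_base h0 hc
    · push_neg at hc
      have h2 : Tendsto (fun x : ℝ =>
          ((x + (c-1)) / x) * (Real.Gamma (x + (c-1)) / (x ^ (c-1) * Real.Gamma x)))
          atTop (𝓝 1) := by
        have ha : Tendsto (fun x : ℝ => (x + (c-1)) / x) atTop (𝓝 1) := by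
          simpa using aux_div_tendsto (c-1) 0
        simpa using ha.mul (ih (c-1) (by linarith) (by push_cast; push_cast at h1; linarith))
      refine h2.congr' ?_
      filter_upwards [eventually_gt_atTop (0:ℝ)] with x hx
      have hxc : x + (c - 1) ≠ 0 := ne_of_gt (by linarith)
      have hΓ : Real.Gamma (x + c) = (x + (c-1)) * Real.Gamma (x + (c-1)) := by
        rw [show x + c = (x + (c-1)) + 1 by ring, Real.Gamma_add_one hxc]
      have hpow : x ^ c = x ^ (c-1) * x := by
        have h := Real.rpow_add hx (c-1) 1
        rw [Real.rpow_one] at h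
        rw [← h]
        norm_num
      have hΓx : Real.Gamma x ≠ 0 := (Real.Gamma_pos_of_pos hx).ne'
      rw [hΓ, hpow, div_mul_div_comm]
      rw [div_eq_div_iff (by positivity) (by positivity)]
      ring

lemma gamma_ratio {c : ℝ} (hc : 0 ≤ c) :
    Tendsto (fun x : ℝ => Real.Gamma (x + c) / (x ^ c * Real.Gamma x)) atTop (𝓝 1) :=
  gamma_ratio_aux ⌈c⌉₊ c hc (by have := Nat.le_ceil c; push_cast; linarith)


/-- For fixed `β_2, …, β_n > -1/2`, as `β_1 → ∞`,
`∫_{∂B(0,1)} x^{2β} dσ ~ 2 e^{β_2+⋯+β_n} (∏_{k≥2} Γ(β_k+1/2)) β_1^{β_1} / |β|^{|β|+(n-1)/2}`,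
i.e. the ratio of the two sides tends to `1`.  Here the unit sphere in `ℝⁿ` (`n ≥ 3`)
carries the surface measure; the first coordinate `β_1` is the varying variable `b`,
and `i0` denotes the first index. -/
theorem sphere_integral_asymptotic (n : ℕ) (hn : 3 ≤ n) (i0 : Fin n) (hi0 : (i0 : ℕ) = 0)
    (β : Fin n → ℝ) (hβ : ∀ k, k ≠ i0 → -1/2 < β k) :
    Tendsto (fun b : ℝ =>
      (∫ x : Metric.sphere (0 : EuclideanSpace ℝ (Fin n)) 1,
        (∏ i : Fin n, |(x : EuclideanSpace ℝ (Fin n)) i| ^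
          (2 * Function.update β i0 b i))
        ∂((volume : Measure (EuclideanSpace ℝ (Fin n))).toSphere)) /
      (2 * Real.exp (∑ i ∈ Finset.univ.erase i0, β i) *
        (∏ i ∈ Finset.univ.erase i0, Real.Gamma (β i + 1/2)) * b ^ b /
        (∑ i, Function.update β i0 b i) ^
          ((∑ i, Function.update β i0 b i) + ((n : ℝ) - 1) / 2)))
      atTop (nhds 1) := by
  classical
  set S : ℝ := ∑ i ∈ Finset.univ.erase i0, β i with hSdef
  set P : ℝ := ∏ i ∈ Finset.univ.erase i0, Real.Gamma (β i + 1/2) with hPdef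
  have hcard : (Finset.univ.erase i0).card = n - 1 := by
    rw [Finset.card_erase_of_mem (Finset.mem_univ i0), Finset.card_univ, Fintype.card_fin]
  have hS : -(((n:ℝ)-1)/2) < S := by
    have h1 : ∑ i ∈ Finset.univ.erase i0, (-1/2 : ℝ) < S := by
      refine Finset.sum_lt_sum_of_nonempty ?_ fun i hi => hβ i (Finset.ne_of_mem_erase hi)
      rw [← Finset.card_pos, hcard]; omega
    rw [Finset.sum_const, hcard, nsmul_eq_mul] at h1
    have : ((n - 1 : ℕ) : ℝ) = (n : ℝ) - 1 := by
      rw [Nat.cast_sub (by omega), Nat.cast_one]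
    rw [this] at h1; linarith
  have hP : 0 < P := Finset.prod_pos fun i hi =>
    Real.Gamma_pos_of_pos (by have := hβ i (Finset.ne_of_mem_erase hi); linarith)
  set c : ℝ := S + ((n:ℝ)-1)/2 with hcdef
  have hc : 0 < c := by rw [hcdef]; linarith
  -- the three limit factors
  have hA : Tendsto (fun b : ℝ =>
      ((b + 1/2) ^ c * Real.Gamma (b + 1/2)) / Real.Gamma ((b + 1/2) + c)) atTop (𝓝 1) := by
    have h1 := (gamma_ratio hc.le).comp
      (tendsto_atTop_add_const_right atTop (1/2 : ℝ) tendsto_id)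
    have h2 := h1.inv₀ one_ne_zero
    simp only [Function.comp, inv_div, inv_one] at h2 ⊢
    exact h2
  have hB : Tendsto (fun b : ℝ => (1 + S/b) ^ b / Real.exp S) atTop (𝓝 1) := by
    have := (tendsto_one_add_div_rpow_exp S).div_const (Real.exp S)
    rwa [div_self (Real.exp_ne_zero S)] at this
  have hC : Tendsto (fun b : ℝ => ((b + S)/(b + 1/2)) ^ c) atTop (𝓝 1) := by
    have := (aux_div_tendsto S (1/2)).rpow_const (p := c) (Or.inl one_ne_zero)
    simpa using this
  have hABC := (hA.mul hB).mul hC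
  rw [show ((1:ℝ) * 1 * 1) = 1 by norm_num] at hABC
  refine hABC.congr' ?_
  filter_upwards [eventually_gt_atTop (1 + |S|)] with b hb
  have hb1 : 1 < b := lt_of_le_of_lt (le_add_of_nonneg_right (abs_nonneg S)) hb
  have hb0 : 0 < b := by linarith
  have hbS : 0 < b + S := by have := neg_abs_le S; linarith
  have hbh : 0 < b + 1/2 := by linarith
  -- rewrite the integral by the exact formula
  have hγ : ∀ i, -1/2 < Function.update β i0 b i := by
    intro i
    rcases eq_or_ne i i0 with rfl | hne
    · rw [Function.update_self]; linarith
    · rw [Function.update_of_ne hne]; exact hβ i hne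
  have hsumγ : ∑ i, Function.update β i0 b i = b + S := by
    rw [← Finset.add_sum_erase Finset.univ _ (Finset.mem_univ i0), Function.update_self]
    congr 1
    exact Finset.sum_congr rfl fun i hi =>
      Function.update_of_ne (Finset.ne_of_mem_erase hi) _ _
  have hprodγ : ∏ i, Real.Gamma (Function.update β i0 b i + 1/2)
      = Real.Gamma (b + 1/2) * P := by
    rw [← Finset.mul_prod_erase Finset.univ _ (Finset.mem_univ i0), Function.update_self]
    congr 1
    exact Finset.prod_congr rfl fun i hi => by
      rw [Function.update_of_ne (Finset.ne_of_mem_erase hi)]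
  rw [sphere_formula n hn _ hγ, hprodγ, hsumγ]
  -- now pure algebra
  have hΓb : 0 < Real.Gamma (b + 1/2) := Real.Gamma_pos_of_pos (by linarith)
  have hΓd : 0 < Real.Gamma (b + S + (n:ℝ)/2) := Real.Gamma_pos_of_pos (by
    have : (0:ℝ) < ((n:ℝ)-1)/2 + 1/2 := by
      have : (3:ℝ) ≤ n := by exact_mod_cast hn
      linarith
    nlinarith [hS, hb0])
  have harg : (b + 1/2) + c = b + S + (n:ℝ)/2 := by rw [hcdef]; ring
  rw [harg]
  have e1 : (1 + S/b) = (b + S)/b := by field_simp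
  have e2 : ((b+S)/b) ^ b = (b+S) ^ b / b ^ b := Real.div_rpow hbS.le hb0.le b
  have e3 : ((b+S)/(b+1/2)) ^ c = (b+S) ^ c / (b+1/2) ^ c :=
    Real.div_rpow hbS.le hbh.le c
  have e4 : (b + S) ^ (b + S + ((n:ℝ)-1)/2) = (b+S) ^ b * (b+S) ^ c := by
    rw [← Real.rpow_add hbS]; congr 1; rw [hcdef]; ring
  rw [e1, e2, e3, e4]
  have hbb : (0:ℝ) < b ^ b := Real.rpow_pos_of_pos hb0 b
  have hp1 : (0:ℝ) < (b+S) ^ b := Real.rpow_pos_of_pos hbS b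
  have hp2 : (0:ℝ) < (b+S) ^ c := Real.rpow_pos_of_pos hbS c
  have hp3 : (0:ℝ) < (b+1/2) ^ c := Real.rpow_pos_of_pos hbh c
  have hexp : (0:ℝ) < Real.exp S := Real.exp_pos S
  field_simp
end

section
/- The Gamma function satisfies Γ(x+a) ~ √(2πx) · x^{x+a−1} e^{−x} as x → ∞, for any fixed a ≥ 0 (i.e., the ratio tends to 1). -/
open Filter Real Nat

noncomputable def qaux (a x : ℝ) : ℝ := Stirling.stirlingSeq ⌊x+a⌋₊ / Real.sqrt π

noncomputable def Eaux (a x : ℝ) : ℝ :=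
  Real.log ((⌊x+a⌋₊:ℝ) / x) * (x + a - 1/2) + (x - ⌊x+a⌋₊)

noncomputable def Faux (a x : ℝ) : ℝ :=
  Real.log ((x+a) / (⌊x+a⌋₊:ℝ)) * ((x + a - ⌊x+a⌋₊) - 1)

lemma gamma_upper_aux {n : ℕ} (hn : 1 ≤ n) {s : ℝ} (hs0 : 0 ≤ s) (hs1 : s ≤ 1) :
    Real.Gamma ((n : ℝ) + s) ≤ (n ! : ℝ) * (n : ℝ) ^ (s - 1) := by
  have hnp : (0 : ℝ) < n := by exact_mod_cast hn
  have hΓn : 0 < Real.Gamma (n : ℝ) := Real.Gamma_pos_of_pos hnp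
  have hΓn1 : 0 < Real.Gamma ((n : ℝ) + 1) := Real.Gamma_pos_of_pos (by linarith)
  have hconv := Real.convexOn_log_Gamma.2 (Set.mem_Ioi.2 hnp)
    (Set.mem_Ioi.2 (show (0:ℝ) < (n:ℝ) + 1 by linarith))
    (by linarith : (0:ℝ) ≤ 1 - s) hs0 (by ring)
  simp only [smul_eq_mul, Function.comp_apply] at hconv
  have heq : (1 - s) * (n : ℝ) + s * ((n : ℝ) + 1) = (n : ℝ) + s := by ring
  rw [heq] at hconv
  have hpos : 0 < Real.Gamma ((n : ℝ) + s) := Real.Gamma_pos_of_pos (by linarith)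
  have key : Real.Gamma (n:ℝ) * (n:ℝ) = (n ! : ℝ) := by
    rw [mul_comm, ← Real.Gamma_add_one (ne_of_gt hnp)]
    exact_mod_cast Real.Gamma_nat_eq_factorial n
  calc Real.Gamma ((n:ℝ) + s) ≤ Real.exp ((1 - s) * Real.log (Real.Gamma n)
        + s * Real.log (Real.Gamma ((n:ℝ) + 1))) := (Real.log_le_iff_le_exp hpos).1 hconv
    _ = Real.Gamma (n:ℝ) ^ (1 - s) * Real.Gamma ((n:ℝ)+1) ^ s := by
        rw [Real.exp_add, Real.rpow_def_of_pos hΓn, Real.rpow_def_of_pos hΓn1,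
          mul_comm (Real.log _), mul_comm (Real.log _)]
    _ = (n ! : ℝ) * (n : ℝ) ^ (s - 1) := by
        rw [Real.Gamma_add_one (ne_of_gt hnp), Real.mul_rpow hnp.le hΓn.le,
          show Real.Gamma (n:ℝ) ^ (1-s) * ((n:ℝ)^s * Real.Gamma (n:ℝ) ^ s)
            = (Real.Gamma (n:ℝ) ^ (1-s) * Real.Gamma (n:ℝ)^s) * (n:ℝ)^s by ring,
          ← Real.rpow_add hΓn, sub_add_cancel, Real.rpow_one,
          Real.rpow_sub hnp, Real.rpow_one, ← key]
        field_simp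

lemma gamma_lower_aux {n : ℕ} (hn : 1 ≤ n) {s : ℝ} (hs0 : 0 ≤ s) (hs1 : s ≤ 1) :
    (n ! : ℝ) * ((n : ℝ) + s) ^ (s - 1) ≤ Real.Gamma ((n : ℝ) + s) := by
  have hnp : (0 : ℝ) < n := by exact_mod_cast hn
  have hns : (0 : ℝ) < (n:ℝ) + s := by linarith
  have hΓ : 0 < Real.Gamma ((n:ℝ) + s) := Real.Gamma_pos_of_pos hns
  have hΓ1 : 0 < Real.Gamma ((n:ℝ) + s + 1) := Real.Gamma_pos_of_pos (by linarith)
  have hconv := Real.convexOn_log_Gamma.2 (Set.mem_Ioi.2 hns)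
    (Set.mem_Ioi.2 (show (0:ℝ) < (n:ℝ) + s + 1 by linarith))
    hs0 (by linarith : (0:ℝ) ≤ 1 - s) (by ring)
  simp only [smul_eq_mul, Function.comp_apply] at hconv
  have heq : s * ((n:ℝ) + s) + (1 - s) * ((n:ℝ) + s + 1) = (n:ℝ) + 1 := by ring
  rw [heq] at hconv
  have hrec : Real.Gamma ((n:ℝ) + s + 1) = ((n:ℝ) + s) * Real.Gamma ((n:ℝ) + s) :=
    Real.Gamma_add_one (ne_of_gt hns)
  have hfact : Real.Gamma ((n:ℝ) + 1) = (n ! : ℝ) := Real.Gamma_nat_eq_factorial n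
  rw [hrec, Real.log_mul (ne_of_gt hns) (ne_of_gt hΓ), hfact] at hconv
  have hlog : Real.log (n ! : ℝ)
      ≤ Real.log (Real.Gamma ((n:ℝ)+s)) + (1-s) * Real.log ((n:ℝ)+s) := by
    linarith [hconv]
  have hfp : (0:ℝ) < (n ! : ℝ) := by exact_mod_cast Nat.factorial_pos n
  have := (Real.log_le_iff_le_exp hfp).1 hlog
  rw [Real.exp_add, Real.exp_log hΓ, mul_comm ((1:ℝ)-s), ← Real.rpow_def_of_pos hns] at this
  have hp : (0:ℝ) < ((n:ℝ) + s) ^ ((1:ℝ) - s) := Real.rpow_pos_of_pos hns _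
  rw [show s - 1 = -(1 - s) by ring, Real.rpow_neg hns.le]
  rw [← div_eq_mul_inv, div_le_iff₀ hp]
  exact this

lemma bridge_aux {a x N : ℝ} (hx : 0 < x) (hN : 0 < N) :
    Real.sqrt (2*x) * x ^ (x+a-1) * Real.exp (-x)
      * Real.exp (Real.log (N/x) * (x + a - 1/2) + (x - N))
    = Real.sqrt (2*N) * N ^ (x+a-1) * Real.exp (-N) := by
  have hdiv : 0 < N / x := div_pos hN hx
  have h1 : Real.exp (Real.log (N/x) * (x+a-1/2)) = (N/x) ^ (x+a-1/2) :=
    (Real.rpow_def_of_pos hdiv _).symm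
  have h2 : (N/x) ^ (x+a-(1:ℝ)/2)
      = N ^ (x+a-1) * Real.sqrt N / (x ^ (x+a-1) * Real.sqrt x) := by
    rw [show x+a-(1:ℝ)/2 = (x+a-1)+(1/2) by ring, Real.rpow_add hdiv,
      Real.div_rpow hN.le hx.le, Real.div_rpow hN.le hx.le,
      ← Real.sqrt_eq_rpow, ← Real.sqrt_eq_rpow]
    ring
  have hxe : (0:ℝ) < x ^ (x+a-1) := Real.rpow_pos_of_pos hx _
  have hsx : (0:ℝ) < Real.sqrt x := Real.sqrt_pos.2 hx
  have hexp : Real.exp (-x) * Real.exp (x - N) = Real.exp (-N) := by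
    rw [← Real.exp_add]; ring_nf
  rw [Real.exp_add, h1, h2, Real.sqrt_mul (by norm_num : (0:ℝ) ≤ 2) x,
    Real.sqrt_mul (by norm_num : (0:ℝ) ≤ 2) N, div_eq_mul_inv, mul_inv]
  calc Real.sqrt 2 * Real.sqrt x * x ^ (x+a-1) * Real.exp (-x)
      * (N ^ (x+a-1) * Real.sqrt N * ((x ^ (x+a-1))⁻¹ * (Real.sqrt x)⁻¹) * Real.exp (x - N))
      = (Real.sqrt 2 * Real.sqrt N * N ^ (x+a-1)) * (Real.exp (-x) * Real.exp (x-N))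
        * ((x ^ (x+a-1) * (x ^ (x+a-1))⁻¹) * (Real.sqrt x * (Real.sqrt x)⁻¹)) := by ring
    _ = Real.sqrt 2 * Real.sqrt N * N ^ (x+a-1) * Real.exp (-N) := by
        rw [mul_inv_cancel₀ hxe.ne', mul_inv_cancel₀ hsx.ne', hexp]; ring

lemma tendsto_qaux (a : ℝ) : Tendsto (qaux a) atTop (nhds 1) := by
  have hfloor : Tendsto (fun x : ℝ => ⌊x + a⌋₊) atTop atTop :=
    tendsto_nat_floor_atTop.comp (tendsto_atTop_add_const_right atTop a tendsto_id)
  have h := (Stirling.tendsto_stirlingSeq_sqrt_pi.comp hfloor).div_const (Real.sqrt π)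
  rwa [div_self (Real.sqrt_ne_zero'.2 pi_pos)] at h

lemma tendsto_Eaux (a : ℝ) (ha : 0 ≤ a) : Tendsto (Eaux a) atTop (nhds 0) := by
  unfold Eaux
  set K := a + 1 with hK
  have hK1 : (1:ℝ) ≤ K := by simp [hK]; linarith
  refine squeeze_zero_norm' ?_
    ((tendsto_const_nhds (α := ℝ) (x := 5*K^2)).div_atTop tendsto_id)
  filter_upwards [eventually_ge_atTop (2*K)] with x hx
  have hx2 : (2:ℝ) ≤ x := by linarith
  have hx0 : (0:ℝ) < x := by linarith
  have hxa1 : (1:ℝ) ≤ x + a := by linarith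
  have hxa0 : (0:ℝ) ≤ x + a := by linarith
  set N : ℝ := ((⌊x+a⌋₊ : ℕ) : ℝ) with hNdef
  have hN1 : (1:ℝ) ≤ N := by
    have : 1 ≤ ⌊x+a⌋₊ := Nat.le_floor (by exact_mod_cast hxa1)
    rw [hNdef]; exact_mod_cast this
  have hNle : N ≤ x + a := Nat.floor_le hxa0
  have hlt : x + a < N + 1 := Nat.lt_floor_add_one _
  set s := x + a - N with hs
  have hs0 : 0 ≤ s := by simp only [hs]; linarith
  have hs1 : s < 1 := by simp only [hs]; linarith
  set v := (s - a)/x with hv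
  have hsaK : |s - a| ≤ K := by
    rw [abs_le]; constructor <;> simp only [hK] <;> linarith
  have hvabs : |v| ≤ K / x := by
    rw [hv, abs_div, abs_of_pos hx0]
    gcongr
  have hvhalf : |v| ≤ 1/2 := by
    refine hvabs.trans ?_
    rw [div_le_iff₀ hx0]; linarith
  have hv1 : |v| < 1 := lt_of_le_of_lt hvhalf (by norm_num)
  have hlog := Real.abs_log_sub_add_sum_range_le hv1 1
  simp only [Finset.sum_range_one, pow_one, Nat.cast_zero, zero_add, div_one] at hlog
  norm_num at hlog
  have hNx : N / x = 1 - v := by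
    rw [hv, hs]; field_simp; ring
  have hxNeq : x - N = v * x := by
    rw [hv, hs]; field_simp; ring
  have hEeq : Real.log (N/x) * (x+a-1/2) + (x-N)
      = (v + Real.log (1-v))*(x+a-1/2) - v*(a-1/2) := by
    rw [hNx, hxNeq]; ring
  rw [Real.norm_eq_abs, hEeq]
  have habs1 : |v + Real.log (1-v)| ≤ 2*(K/x)^2 := by
    refine hlog.trans ?_
    calc v^2/(1-|v|) ≤ v^2/(1/2) := by
          apply div_le_div_of_nonneg_left (by positivity) (by norm_num) (by linarith)
      _ = 2*v^2 := by ring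
      _ ≤ 2*(K/x)^2 := by
          have h := pow_le_pow_left₀ (abs_nonneg v) hvabs 2
          rw [sq_abs] at h
          linarith
  have habs2 : |a - 1/2| ≤ K := by
    rw [abs_le]; constructor <;> simp only [hK] <;> linarith
  have hterm1 : |v + Real.log (1-v)| * |x+a-1/2| ≤ (2*(K/x)^2) * (2*x) := by
    apply mul_le_mul habs1 ?_ (abs_nonneg _) (by positivity)
    rw [abs_le]; constructor <;> linarith
  have hterm2 : |v| * |a-1/2| ≤ (K/x) * K :=
    mul_le_mul hvabs habs2 (abs_nonneg _) (by positivity)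
  calc |(v + Real.log (1-v))*(x+a-1/2) - v*(a-1/2)|
      ≤ |v + Real.log (1-v)| * |x+a-1/2| + |v| * |a-1/2| := by
        refine (abs_sub _ _).trans ?_
        rw [abs_mul, abs_mul]
    _ ≤ (2*(K/x)^2) * (2*x) + (K/x) * K := add_le_add hterm1 hterm2
    _ = 5*K^2/x := by field_simp; ring

lemma tendsto_Faux (a : ℝ) (ha : 0 ≤ a) : Tendsto (Faux a) atTop (nhds 0) := by
  unfold Faux
  refine squeeze_zero_norm' ?_
    ((tendsto_const_nhds (α := ℝ) (x := (2:ℝ))).div_atTop tendsto_id)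
  filter_upwards [eventually_ge_atTop 2] with x hx2
  have hx0 : (0:ℝ) < x := by linarith
  have hxa1 : (1:ℝ) ≤ x + a := by linarith
  have hxa0 : (0:ℝ) ≤ x + a := by linarith
  set N : ℝ := ((⌊x+a⌋₊ : ℕ) : ℝ) with hNdef
  have hN1 : (1:ℝ) ≤ N := by
    have : 1 ≤ ⌊x+a⌋₊ := Nat.le_floor (by exact_mod_cast hxa1)
    rw [hNdef]; exact_mod_cast this
  have hNle : N ≤ x + a := Nat.floor_le hxa0
  have hlt : x + a < N + 1 := Nat.lt_floor_add_one _
  have hN0 : (0:ℝ) < N := by linarith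
  have hrat1 : (1:ℝ) ≤ (x+a)/N := (one_le_div hN0).2 hNle
  have hlogpos : 0 ≤ Real.log ((x+a)/N) := Real.log_nonneg hrat1
  have hlogle : Real.log ((x+a)/N) ≤ 2/x := by
    calc Real.log ((x+a)/N) ≤ (x+a)/N - 1 :=
          Real.log_le_sub_one_of_pos (by positivity)
      _ = (x + a - N)/N := by field_simp
      _ ≤ 1/N := by
          gcongr
          linarith
      _ ≤ 2/x := by
          rw [div_le_div_iff₀ hN0 hx0]; linarith
  rw [Real.norm_eq_abs, abs_mul]
  have h1 : |Real.log ((x+a)/N)| ≤ 2/x := by rwa [abs_of_nonneg hlogpos]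
  have h2 : |x + a - N - 1| ≤ 1 := by rw [abs_le]; constructor <;> linarith
  calc |Real.log ((x+a)/N)| * |x + a - N - 1| ≤ (2/x) * 1 :=
        mul_le_mul h1 h2 (abs_nonneg _) (by positivity)
    _ = 2/x := by ring

lemma sandwich_aux (a : ℝ) (ha : 0 ≤ a) : ∀ᶠ x in atTop,
    qaux a x * Real.exp (Eaux a x + Faux a x)
      ≤ Real.Gamma (x+a) / (Real.sqrt (2*π*x) * x ^ (x+a-1) * Real.exp (-x)) ∧
    Real.Gamma (x+a) / (Real.sqrt (2*π*x) * x ^ (x+a-1) * Real.exp (-x))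
      ≤ qaux a x * Real.exp (Eaux a x) := by
  filter_upwards [eventually_ge_atTop 2] with x hx2
  have hx0 : (0:ℝ) < x := by linarith
  have hxa1 : (1:ℝ) ≤ x + a := by linarith
  have hxa0 : (0:ℝ) ≤ x + a := by linarith
  have hxap : (0:ℝ) < x + a := by linarith
  set n : ℕ := ⌊x+a⌋₊ with hndef
  set N : ℝ := ((n : ℕ) : ℝ) with hNdef
  have hn1 : 1 ≤ n := Nat.le_floor (by exact_mod_cast hxa1)
  have hN1 : (1:ℝ) ≤ N := by rw [hNdef]; exact_mod_cast hn1
  have hN0 : (0:ℝ) < N := by linarith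
  have hNle : N ≤ x + a := Nat.floor_le hxa0
  have hlt : x + a < N + 1 := Nat.lt_floor_add_one _
  set s := x + a - N with hs
  have hs0 : 0 ≤ s := by simp only [hs]; linarith
  have hs1 : s ≤ 1 := by simp only [hs]; linarith
  have hxa_eq : x + a = N + s := by rw [hs]; ring
  have hD : (0:ℝ) < Real.sqrt (2*π*x) * x ^ (x+a-1) * Real.exp (-x) := by
    have h2πx : (0:ℝ) < 2*π*x := by positivity
    have := Real.sqrt_pos.2 h2πx
    have := Real.rpow_pos_of_pos hx0 (x+a-1)
    positivity
  -- stirling sequence identity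
  have hnp : (0:ℝ) < (n:ℝ) := by exact_mod_cast hn1
  have hden : (0:ℝ) < Real.sqrt (2*(n:ℝ)) * ((n:ℝ)/Real.exp 1)^n := by positivity
  have hfact : (n ! : ℝ) = Stirling.stirlingSeq n * (Real.sqrt (2*N) * (N/Real.exp 1)^n) := by
    rw [hNdef, Stirling.stirlingSeq, div_mul_cancel₀ _ hden.ne']
  have hpow : (N/Real.exp 1)^n * N^(s-1) = N^(x+a-1) * Real.exp (-N) := by
    rw [div_pow, ← Real.rpow_natCast N n, Real.exp_one_pow,
      div_eq_mul_inv, ← Real.exp_neg]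
    rw [show N^((n:ℕ):ℝ) * Real.exp (-(n:ℕ):ℝ) * N^(s-1)
      = (N^((n:ℕ):ℝ) * N^(s-1)) * Real.exp (-(n:ℕ):ℝ) by ring]
    rw [← Real.rpow_add hN0]
    have hexp2 : ((n:ℕ):ℝ) + (s-1) = x + a - 1 := by rw [hs, hNdef]; ring
    rw [hexp2, hNdef]
  have hbridge := bridge_aux (a := a) hx0 hN0
  have hsqrtsplit : Real.sqrt (2*π*x) = Real.sqrt π * Real.sqrt (2*x) := by
    rw [show 2*π*x = π*(2*x) by ring, Real.sqrt_mul pi_pos.le]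
  have hπ : Real.sqrt π ≠ 0 := Real.sqrt_ne_zero'.2 pi_pos
  have hI1 : (n ! : ℝ) * N^(s-1)
      = qaux a x * Real.exp (Eaux a x)
        * (Real.sqrt (2*π*x) * x ^ (x+a-1) * Real.exp (-x)) := by
    have hEdef : Eaux a x = Real.log (N/x) * (x + a - 1/2) + (x - N) := by
      rw [Eaux, hNdef, hndef]
    calc (n ! : ℝ) * N^(s-1)
        = Stirling.stirlingSeq n * (Real.sqrt (2*N) * ((N/Real.exp 1)^n * N^(s-1))) := by
          rw [hfact]; ring
      _ = Stirling.stirlingSeq n * (Real.sqrt (2*N) * (N^(x+a-1) * Real.exp (-N))) := by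
          rw [hpow]
      _ = Stirling.stirlingSeq n
          * (Real.sqrt (2*x) * x ^ (x+a-1) * Real.exp (-x) * Real.exp (Eaux a x)) := by
          rw [hEdef, hbridge]; ring
      _ = qaux a x * Real.exp (Eaux a x)
          * (Real.sqrt (2*π*x) * x ^ (x+a-1) * Real.exp (-x)) := by
          rw [hsqrtsplit]
          simp only [qaux]
          rw [← hndef, div_eq_mul_inv]
          field_simp
  have hFexp : Real.exp (Faux a x) = (x+a)^(s-1) / N^(s-1) := by
    have hFdef : Faux a x = Real.log ((x+a)/N) * (s - 1) := by
      rw [Faux, hNdef, hndef, hs]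
    rw [hFdef, ← Real.rpow_def_of_pos (div_pos hxap hN0), Real.div_rpow hxa0 hN0.le]
  have hNs : (0:ℝ) < N^(s-1) := Real.rpow_pos_of_pos hN0 _
  have hI2 : (n ! : ℝ) * (x+a)^(s-1)
      = qaux a x * Real.exp (Eaux a x + Faux a x)
        * (Real.sqrt (2*π*x) * x ^ (x+a-1) * Real.exp (-x)) := by
    rw [Real.exp_add, hFexp]
    rw [show qaux a x * (Real.exp (Eaux a x) * ((x+a)^(s-1)/N^(s-1)))
        * (Real.sqrt (2*π*x) * x ^ (x+a-1) * Real.exp (-x))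
      = (qaux a x * Real.exp (Eaux a x)
          * (Real.sqrt (2*π*x) * x ^ (x+a-1) * Real.exp (-x))) * ((x+a)^(s-1)/N^(s-1)) by ring]
    rw [← hI1]
    field_simp
  have hup := gamma_upper_aux hn1 hs0 hs1
  have hlo := gamma_lower_aux hn1 hs0 hs1
  rw [← hNdef] at hup hlo
  constructor
  · rw [le_div_iff₀ hD, ← hI2, hxa_eq]
    exact hlo
  · rw [div_le_iff₀ hD, ← hI1, hxa_eq]
    exact hup

/-- Stirling-type asymptotics for the Gamma function: for fixed `a ≥ 0`,
`Γ(x + a) ~ √(2πx) x^{x+a-1} e^{-x}` as `x → ∞`, i.e. the ratio tends to `1`. -/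
theorem gamma_stirling_asymptotic (a : ℝ) (ha : 0 ≤ a) :
    Tendsto (fun x : ℝ =>
      Real.Gamma (x + a) / (Real.sqrt (2 * π * x) * x ^ (x + a - 1) * Real.exp (-x)))
      atTop (nhds 1) := by
  have hq := tendsto_qaux a
  have hE := tendsto_Eaux a ha
  have hF := tendsto_Faux a ha
  have hexpE : Tendsto (fun x => Real.exp (Eaux a x)) atTop (nhds 1) := by
    have := (Real.continuous_exp.tendsto 0).comp hE
    simpa [Function.comp_def] using this
  have hexpEF : Tendsto (fun x => Real.exp (Eaux a x + Faux a x)) atTop (nhds 1) := by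
    have := (Real.continuous_exp.tendsto 0).comp (by simpa using hE.add hF)
    simpa [Function.comp_def] using this
  have hupper : Tendsto (fun x => qaux a x * Real.exp (Eaux a x)) atTop (nhds 1) := by
    have := hq.mul hexpE
    simpa using this
  have hlower : Tendsto (fun x => qaux a x * Real.exp (Eaux a x + Faux a x)) atTop (nhds 1) := by
    have := hq.mul hexpEF
    simpa using this
  exact tendsto_of_tendsto_of_tendsto_of_le_of_le' hlower hupper
    ((sandwich_aux a ha).mono fun x h => h.1)
    ((sandwich_aux a ha).mono fun x h => h.2)
end
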